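/- Fix a finite simplicial complex X on vertex set V, a field K, and an integer d ≥ 0. For integers k, m ≥ 0, say X satisfies condition P(k,m) if H̃_i(lk(X[A],B); K) = 0 for all i ≥ d and all B ⊆ A ⊆ V with |A| ≥ |V| − k and |B| ≤ m. Then for all k ≥ 0 and m ≥ 1, X satisfies P(k,m) if and only if X satisfies P(k+1, m−1). -/

import Mathlib

open Finset

/-- A finite abstract simplicial complex on the vertex type `V` (possibly void;
any non-void complex contains the empty face `∅` by downward closure). -/
structure SComplex (V : Type) [DecidableEq V] where
  faces : Finset (Finset V)
  down_closed : ∀ ⦃σ : Finset V⦄, σ ∈ faces → ∀ ⦃τ : Finset V⦄, τ ⊆ σ → τ ∈ faces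

namespace SComplex

variable {V : Type} [DecidableEq V]

/-- Intersection of two simplicial complexes on the same vertex set. -/
def inter (X Y : SComplex V) : SComplex V where
  faces := X.faces ∩ Y.faces
  down_closed := fun σ hσ τ hτ => by
    rw [Finset.mem_inter] at hσ ⊢
    exact ⟨X.down_closed hσ.1 hτ, Y.down_closed hσ.2 hτ⟩

/-- Union of two simplicial complexes on the same vertex set. -/
def union (X Y : SComplex V) : SComplex V where
  faces := X.faces ∪ Y.faces
  down_closed := fun σ hσ τ hτ => by
    rw [Finset.mem_union] at hσ ⊢
    exact hσ.elim (fun h => Or.inl (X.down_closed h hτ)) (fun h => Or.inr (Y.down_closed h hτ))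

/-- The induced subcomplex `X[S] = {σ ∈ X : σ ⊆ S}`. -/
def induced (X : SComplex V) (S : Finset V) : SComplex V where
  faces := X.faces.filter (fun σ => σ ⊆ S)
  down_closed := fun σ hσ τ hτ => by
    rw [Finset.mem_filter] at hσ ⊢
    exact ⟨X.down_closed hσ.1 hτ, hτ.trans hσ.2⟩

/-- The link `lk(X,A) = {τ ∈ X : τ ∩ A = ∅, τ ∪ A ∈ X}`; it is the void
complex when `A ∉ X`. -/
def link (X : SComplex V) (A : Finset V) : SComplex V where
  faces := X.faces.filter (fun τ => τ ∩ A = ∅ ∧ τ ∪ A ∈ X.faces)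
  down_closed := fun σ hσ τ hτ => by
    rw [Finset.mem_filter] at hσ ⊢
    refine ⟨X.down_closed hσ.1 hτ, Finset.subset_empty.1 ?_,
      X.down_closed hσ.2.2 (Finset.union_subset_union hτ (Finset.Subset.refl A))⟩
    rw [← hσ.2.1]
    exact Finset.inter_subset_inter hτ (Finset.Subset.refl A)

/-- The full simplex `Δ(A)` on a vertex set `A`. -/
def simplexOn (A : Finset V) : SComplex V where
  faces := A.powerset
  down_closed := fun σ hσ τ hτ =>
    Finset.mem_powerset.2 (hτ.trans (Finset.mem_powerset.1 hσ))

/-- The boundary `∂Δ(A)` of the simplex on `A` (all proper subsets of `A`). -/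
def bdSimplex (A : Finset V) : SComplex V where
  faces := A.powerset.erase A
  down_closed := fun σ hσ τ hτ => by
    rw [Finset.mem_erase, Finset.mem_powerset] at hσ ⊢
    refine ⟨fun hτA => hσ.1 ?_, hτ.trans hσ.2⟩
    subst hτA
    exact Finset.Subset.antisymm hσ.2 hτ

variable [Fintype V]

/-- Intersection of a finite family of complexes on the same vertex set. -/
def interFam {r : ℕ} (X : Fin r → SComplex V) : SComplex V where
  faces := Finset.univ.filter (fun σ => ∀ i, σ ∈ (X i).faces)
  down_closed := fun σ hσ τ hτ => by
    rw [Finset.mem_filter] at hσ ⊢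
    exact ⟨Finset.mem_univ τ, fun i => (X i).down_closed (hσ.2 i) hτ⟩

/-- Union of a finite family of complexes on the same vertex set. -/
def unionFam {r : ℕ} (X : Fin r → SComplex V) : SComplex V where
  faces := Finset.univ.filter (fun σ => ∃ i, σ ∈ (X i).faces)
  down_closed := fun σ hσ τ hτ => by
    rw [Finset.mem_filter] at hσ ⊢
    obtain ⟨-, i, hi⟩ := hσ
    exact ⟨Finset.mem_univ τ, i, (X i).down_closed hi hτ⟩

/-- The join of a family of complexes `Z i`, the `i`-th one having its vertices
inside the block `Vs i` of a partition of the vertex set: the faces are the sets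
whose trace on each block is a face of the corresponding complex. -/
def joinFam {r : ℕ} (Vs : Fin r → Finset V) (Z : Fin r → SComplex V) : SComplex V where
  faces := Finset.univ.filter (fun σ => ∀ i, σ ∩ Vs i ∈ (Z i).faces)
  down_closed := fun σ hσ τ hτ => by
    rw [Finset.mem_filter] at hσ ⊢
    exact ⟨Finset.mem_univ τ, fun i =>
      (Z i).down_closed (hσ.2 i) (Finset.inter_subset_inter hτ (Finset.Subset.refl _))⟩

/-- The Alexander dual `X* = {τ : [n] - τ ∉ X}`. -/
def dual (X : SComplex V) : SComplex V where
  faces := Finset.univ.filter (fun τ => τᶜ ∉ X.faces)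
  down_closed := fun σ hσ τ hτ => by
    rw [Finset.mem_filter] at hσ ⊢
    exact ⟨Finset.mem_univ τ, fun hc => hσ.2 (X.down_closed hc (Finset.compl_subset_compl.2 hτ))⟩

/-- The set of faces of `X` of cardinality `k` (i.e. of dimension `k - 1`). -/
def cells (X : SComplex V) (k : ℕ) : Finset (Finset V) :=
  X.faces.filter (fun σ => σ.card = k)

/-- The space of simplicial `(k-1)`-dimensional chains of `X` with coefficients
in `K`: chains are indexed by cardinality, so degree `k` chains are spanned by
the faces of cardinality `k`.  (In particular degree `0` chains are spanned by
the empty face, giving the augmented chain complex computing reduced homology.) -/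
abbrev Chains (K : Type) [Field K] (X : SComplex V) (k : ℕ) : Type := ↥(X.cells k) → K

/-- The simplicial boundary map from degree `k+1` chains (on faces of
cardinality `k+1`) to degree `k` chains.  Signs are computed with respect to a
fixed enumeration of the vertices. -/
noncomputable def boundary (K : Type) [Field K] (X : SComplex V) (k : ℕ) :
    Chains K X (k+1) →ₗ[K] Chains K X k :=
  LinearMap.pi fun τ =>
    ∑ σ : ↥(X.cells (k+1)),
      (∑ v ∈ (σ : Finset V),
        if (σ : Finset V).erase v = (τ : Finset V) then
          ((-1 : K) ^ (((σ : Finset V)).filter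
            (fun w => Fintype.equivFin V w < Fintype.equivFin V v)).card)
        else 0) • LinearMap.proj σ

/-- Cycles of the (augmented) simplicial chain complex in degree `k`
(corresponding to homological dimension `k - 1`). -/
noncomputable def cyclesSub (K : Type) [Field K] (X : SComplex V) :
    (k : ℕ) → Submodule K (Chains K X k)
  | 0 => ⊤
  | (m+1) => LinearMap.ker (boundary K X m)

/-- The reduced simplicial homology `H̃_{k-1}(X; K)` (cardinality-indexed: the
argument `k` corresponds to homological dimension `k - 1`). -/
noncomputable abbrev RedHomology (K : Type) [Field K] (X : SComplex V) (k : ℕ) : Type :=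
  ↥(cyclesSub K X k) ⧸ Submodule.comap (cyclesSub K X k).subtype
      (LinearMap.range (boundary K X k))

/-- `h̃_{k-1}(X) = dim_K H̃_{k-1}(X; K)` (cardinality-indexed, as in
`RedHomology`). -/
noncomputable def redHomDim (K : Type) [Field K] (X : SComplex V) (k : ℕ) : ℕ :=
  Module.finrank K (RedHomology K X k)

/-- `dim_K H̃_k(X; K)` for an arbitrary integer `k`; it is zero for `k ≤ -2`.
Here the argument is the genuine homological dimension `k`. -/
noncomputable def redHomDimZ (K : Type) [Field K] (X : SComplex V) (k : ℤ) : ℕ :=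
  if 0 ≤ k + 1 then redHomDim K X (k + 1).toNat else 0

/-- Chains supported on the faces of a subcomplex `A`, inside the chains of `X`. -/
noncomputable def subChains (K : Type) [Field K] (X A : SComplex V) (k : ℕ) :
    Submodule K (Chains K X k) :=
  ⨅ (σ : ↥(X.cells k)) (_ : (σ : Finset V) ∉ A.faces), LinearMap.ker (LinearMap.proj σ)

/-- Relative cycles in homological dimension `i` for the pair `(X, A)`. -/
noncomputable def relCycles (K : Type) [Field K] (X A : SComplex V) (i : ℕ) :
    Submodule K (Chains K X (i+1)) :=
  Submodule.comap (boundary K X i) (subChains K X A i)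

/-- The relative simplicial homology `H_i(X, A; K)` of the pair `(X, A)`. -/
noncomputable abbrev RelHomology (K : Type) [Field K] (X A : SComplex V) (i : ℕ) : Type :=
  ↥(relCycles K X A i) ⧸ Submodule.comap (relCycles K X A i).subtype
      (subChains K X A (i+1) ⊔ LinearMap.range (boundary K X (i+1)))

/-- `dim_K H_i(X, A; K)`. -/
noncomputable def relHomDim (K : Type) [Field K] (X A : SComplex V) (i : ℕ) : ℕ :=
  Module.finrank K (RelHomology K X A i)

/-- `X` is `d`-Leray over `K`: every induced subcomplex has vanishing reduced
homology in dimensions `≥ d`. -/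
def IsLeray (K : Type) [Field K] (d : ℕ) (X : SComplex V) : Prop :=
  ∀ S : Finset V, ∀ i : ℕ, d ≤ i → redHomDim K (X.induced S) (i + 1) = 0

/-- The Leray number `L_K(X)`: the minimal `d` such that `X` is `d`-Leray over `K`. -/
noncomputable def lerayNum (K : Type) [Field K] (X : SComplex V) : ℕ :=
  sInf {d | IsLeray K d X}

end SComplex

/-- Condition `P(k,m)` for a complex `X` on the vertex set `V` (with respect to
a fixed field `K` and a fixed integer `d ≥ 0`): `H̃_i(lk(X[A],B); K) = 0` for
all `i ≥ d` and all `B ⊆ A ⊆ V` with `|A| ≥ |V| - k` and `|B| ≤ m`.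
(Recall that `redHomDim K Z (i+1) = dim_K H̃_i(Z; K)`, cardinality-indexed.) -/
def CondP {V : Type} [DecidableEq V] [Fintype V] (K : Type) [Field K]
    (X : SComplex V) (d k m : ℕ) : Prop :=
  ∀ B A : Finset V, B ⊆ A → Fintype.card V - k ≤ A.card → B.card ≤ m →
    ∀ i : ℕ, d ≤ i → SComplex.redHomDim K ((X.induced A).link B) (i + 1) = 0

namespace CondPAux

open Finset

variable {V : Type} [DecidableEq V] [Fintype V] (K : Type) [Field K]

/-- number of elements of `s` preceding `u` in the fixed enumeration -/
noncomputable def pos (s : Finset V) (u : V) : ℕ :=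
  (s.filter (fun w => Fintype.equivFin V w < Fintype.equivFin V u)).card

noncomputable def coefK (σ t : Finset V) : K :=
  ∑ u ∈ σ, if σ.erase u = t then (-1 : K) ^ (pos σ u) else 0

noncomputable def Dop (g : Finset V → K) : Finset V → K :=
  fun t => ∑ σ ∈ (univ : Finset V).powerset, coefK K σ t * g σ

noncomputable def cval (X : SComplex V) (k : ℕ) (c : SComplex.Chains K X k) :
    Finset V → K :=
  fun s => if h : s ∈ X.cells k then c ⟨s, h⟩ else 0

lemma mem_cells {X : SComplex V} {k : ℕ} {s : Finset V} :
    s ∈ X.cells k ↔ s ∈ X.faces ∧ s.card = k := Finset.mem_filter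

lemma sq_neg_one (n : ℕ) : ((-1 : K) ^ n) * ((-1 : K) ^ n) = 1 := by
  rw [← mul_pow]; norm_num

lemma neg_one_pow_ne_zero' (n : ℕ) : ((-1 : K) ^ n) ≠ 0 :=
  pow_ne_zero n (by norm_num)

lemma pos_insert {u : V} {s : Finset V} (hu : u ∉ s) (w : V) :
    pos (insert u s) w = pos s w +
      (if Fintype.equivFin V u < Fintype.equivFin V w then 1 else 0) := by
  unfold pos
  rw [Finset.filter_insert]
  split_ifs with h
  · rw [Finset.card_insert_of_notMem (fun hc => hu (Finset.mem_of_mem_filter u hc))]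
  · omega

lemma sign_lemma {u v : V} (huv : u ≠ v) {t : Finset V} (hu : u ∉ t) (hv : v ∉ t) :
    ((-1 : K) ^ pos (insert v (insert u t)) u)
      = -(((-1 : K) ^ pos (insert v t) v) *
          (((-1 : K) ^ pos (insert v (insert u t)) v) * ((-1 : K) ^ pos (insert u t) u))) := by
  have hvt : v ∉ insert u t := by simp [Ne.symm huv, hv]
  rw [pos_insert hvt u, pos_insert hvt v, pos_insert hu u, pos_insert hu v, pos_insert hv v]
  have hb := sq_neg_one K (pos t v)
  rcases lt_trichotomy (Fintype.equivFin V u) (Fintype.equivFin V v) with h|h|h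
  · simp only [if_pos h, if_neg (asymm h), if_neg (lt_irrefl (Fintype.equivFin V u)),
      if_neg (lt_irrefl (Fintype.equivFin V v)), pow_add, pow_zero, pow_one, mul_one, add_zero]
    linear_combination (-((-1:K) ^ pos t u)) * hb
  · exact absurd ((Fintype.equivFin V).injective h) huv
  · simp only [if_pos h, if_neg (asymm h), if_neg (lt_irrefl (Fintype.equivFin V u)),
      if_neg (lt_irrefl (Fintype.equivFin V v)), pow_add, pow_zero, pow_one, mul_one, add_zero]
    linear_combination ((-1:K) ^ pos t u) * hb

lemma coefK_insert_self {v : V} {t : Finset V} (hv : v ∉ t) :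
    coefK K (insert v t) t = (-1 : K) ^ pos (insert v t) v := by
  unfold coefK
  rw [Finset.sum_eq_single v]
  · rw [if_pos (Finset.erase_insert hv)]
  · intro u _ huv
    rw [if_neg]
    intro he
    have hvm : v ∈ (insert v t).erase u :=
      Finset.mem_erase.2 ⟨Ne.symm huv, Finset.mem_insert_self v t⟩
    rw [he] at hvm
    exact hv hvm
  · intro h
    exact absurd (Finset.mem_insert_self v t) h

lemma D_vpart {v : V} (w : Finset V → K) (hw : ∀ s, w s ≠ 0 → v ∈ s)
    {t : Finset V} (ht : v ∉ t) :
    Dop K w t = (-1 : K) ^ pos (insert v t) v * w (insert v t) := by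
  unfold Dop
  rw [Finset.sum_eq_single (insert v t)]
  · rw [coefK_insert_self K ht]
  · intro σ _ hσ
    by_cases hv : v ∈ σ
    · have hc : coefK K σ t = 0 := by
        unfold coefK
        refine Finset.sum_eq_zero fun u hu => ?_
        rw [if_neg]
        intro he
        by_cases huv : u = v
        · subst huv
          exact hσ (by rw [← he, Finset.insert_erase hv])
        · have hvm : v ∈ σ.erase u := Finset.mem_erase.2 ⟨fun hvu => huv hvu.symm, hv⟩
          rw [he] at hvm
          exact ht hvm
      rw [hc, zero_mul]
    · have hw0 : w σ = 0 := by by_contra h; exact hv (hw σ h)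
      rw [hw0, mul_zero]
  · intro h
    exact absurd (Finset.mem_powerset.2 (Finset.subset_univ _)) h

noncomputable def psi (v : V) (w : Finset V → K) : Finset V → K :=
  fun τ => if v ∈ τ then 0 else ((-1 : K) ^ pos (insert v τ) v) * w (insert v τ)

lemma coefK_insert_insert {v : V} {τ t : Finset V} (hτ : v ∉ τ) (ht : v ∉ t) :
    coefK K (insert v τ) (insert v t)
      = -(((-1 : K) ^ pos (insert v t) v) * (((-1 : K) ^ pos (insert v τ) v) * coefK K τ t)) := by
  unfold coefK
  rw [Finset.sum_insert hτ]
  have h0 : (if (insert v τ).erase v = insert v t then (-1:K) ^ pos (insert v τ) v else 0) = 0 := by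
    rw [if_neg]
    rw [Finset.erase_insert hτ]
    intro he
    exact hτ (he ▸ Finset.mem_insert_self v t)
  rw [h0, zero_add, Finset.mul_sum, Finset.mul_sum, ← Finset.sum_neg_distrib]
  refine Finset.sum_congr rfl fun u hu => ?_
  have huv : u ≠ v := fun he => hτ (he ▸ hu)
  rw [Finset.erase_insert_of_ne (Ne.symm huv)]
  have hcond : insert v (τ.erase u) = insert v t ↔ τ.erase u = t := by
    constructor
    · intro h
      have h1 : v ∉ τ.erase u := fun hc => hτ (Finset.mem_of_mem_erase hc)
      have := congrArg (fun s => Finset.erase s v) h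
      simpa [Finset.erase_insert h1, Finset.erase_insert ht] using this
    · exact fun h => by rw [h]
  by_cases hc : τ.erase u = t
  · rw [if_pos (hcond.2 hc), if_pos hc]
    have hut : u ∉ t := by rw [← hc]; exact Finset.notMem_erase u τ
    have hτeq : τ = insert u t := by rw [← hc, Finset.insert_erase hu]
    subst hτeq
    have hvt' : v ∉ t := ht
    exact sign_lemma K huv hut hvt'
  · rw [if_neg (fun h => hc (hcond.1 h)), if_neg hc, mul_zero, mul_zero, neg_zero]

lemma D_vpart_v {v : V} (w : Finset V → K) (hw : ∀ s, w s ≠ 0 → v ∈ s)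
    {t : Finset V} (ht : v ∉ t) :
    Dop K w (insert v t)
      = -(((-1 : K) ^ pos (insert v t) v) * Dop K (psi K v w) t) := by
  have hL : Dop K w (insert v t)
      = ∑ σ ∈ ((univ : Finset V).powerset).filter (fun s => v ∈ s),
          coefK K σ (insert v t) * w σ := by
    refine (Finset.sum_filter_of_ne (fun σ _ hσ => ?_)).symm
    by_contra hvσ
    have hw0 : w σ = 0 := by by_contra h; exact hvσ (hw σ h)
    exact hσ (by rw [hw0, mul_zero])
  have hR : Dop K (psi K v w) t
      = ∑ τ' ∈ ((univ : Finset V).powerset).filter (fun s => v ∉ s),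
          coefK K τ' t * psi K v w τ' := by
    refine (Finset.sum_filter_of_ne (fun τ' _ hτ' => ?_)).symm
    by_contra hvτ
    have : psi K v w τ' = 0 := by unfold psi; rw [if_pos hvτ]
    exact hτ' (by rw [this, mul_zero])
  rw [hL, hR, Finset.mul_sum, ← Finset.sum_neg_distrib]
  refine Finset.sum_nbij' (fun σ => σ.erase v) (fun τ' => insert v τ') ?_ ?_ ?_ ?_ ?_
  · intro σ hσ
    rw [Finset.mem_filter] at hσ ⊢
    exact ⟨Finset.mem_powerset.2 (Finset.subset_univ _), Finset.notMem_erase v σ⟩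
  · intro τ' hτ'
    rw [Finset.mem_filter] at hτ' ⊢
    exact ⟨Finset.mem_powerset.2 (Finset.subset_univ _), Finset.mem_insert_self v τ'⟩
  · intro σ hσ
    rw [Finset.mem_filter] at hσ
    exact Finset.insert_erase hσ.2
  · intro τ' hτ'
    rw [Finset.mem_filter] at hτ'
    exact Finset.erase_insert hτ'.2
  · intro σ hσ
    rw [Finset.mem_filter] at hσ
    have hvσ : v ∈ σ := hσ.2
    set τ' := σ.erase v with hτ'def
    have hτv : v ∉ τ' := Finset.notMem_erase v σ
    have hσeq : σ = insert v τ' := (Finset.insert_erase hvσ).symm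
    rw [hσeq, coefK_insert_insert K hτv ht]
    have hψ : psi K v w τ' = ((-1 : K) ^ pos (insert v τ') v) * w (insert v τ') := by
      unfold psi; rw [if_neg hτv]
    rw [hψ]
    ring

lemma D_vfree {v : V} (w : Finset V → K) (hw : ∀ s, w s ≠ 0 → v ∉ s)
    {t : Finset V} (ht : v ∈ t) : Dop K w t = 0 := by
  unfold Dop
  refine Finset.sum_eq_zero fun σ _ => ?_
  by_cases h : w σ = 0
  · rw [h, mul_zero]
  · have hvσ := hw σ h
    have hc : coefK K σ t = 0 := by
      unfold coefK
      refine Finset.sum_eq_zero fun u hu => ?_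
      rw [if_neg]
      intro he
      have : v ∈ σ.erase u := by rw [he]; exact ht
      exact hvσ (Finset.mem_of_mem_erase this)
    rw [hc, zero_mul]

lemma D_supp {X : SComplex V} {k : ℕ} {g : Finset V → K}
    (hg : ∀ s, g s ≠ 0 → s ∈ X.cells (k+1)) {t : Finset V} (ht : t ∉ X.cells k) :
    Dop K g t = 0 := by
  unfold Dop
  refine Finset.sum_eq_zero fun σ _ => ?_
  by_cases h : g σ = 0
  · rw [h, mul_zero]
  · have hσ := mem_cells.1 (hg σ h)
    have hc : coefK K σ t = 0 := by
      unfold coefK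
      refine Finset.sum_eq_zero fun u hu => ?_
      rw [if_neg]
      intro he
      refine ht (mem_cells.2 ⟨X.down_closed hσ.1 (he ▸ Finset.erase_subset u σ), ?_⟩)
      rw [← he, Finset.card_erase_of_mem hu, hσ.2]
      omega
    rw [hc, zero_mul]

lemma Dop_add (g₁ g₂ : Finset V → K) (t : Finset V) :
    Dop K (fun s => g₁ s + g₂ s) t = Dop K g₁ t + Dop K g₂ t := by
  unfold Dop
  rw [← Finset.sum_add_distrib]
  exact Finset.sum_congr rfl fun σ _ => mul_add _ _ _

lemma Dop_neg (g : Finset V → K) (t : Finset V) :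
    Dop K (fun s => -(g s)) t = -(Dop K g t) := by
  unfold Dop
  rw [← Finset.sum_neg_distrib]
  exact Finset.sum_congr rfl fun σ _ => mul_neg _ _

lemma Dop_sub (g₁ g₂ : Finset V → K) (t : Finset V) :
    Dop K (fun s => g₁ s - g₂ s) t = Dop K g₁ t - Dop K g₂ t := by
  unfold Dop
  rw [← Finset.sum_sub_distrib]
  exact Finset.sum_congr rfl fun σ _ => mul_sub _ _ _

lemma Dop_split (v : V) (g : Finset V → K) (t : Finset V) :
    Dop K g t = Dop K (fun s => if v ∈ s then 0 else g s) t
      + Dop K (fun s => if v ∈ s then g s else 0) t := by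
  rw [← Dop_add]
  congr 1
  funext s
  split_ifs <;> simp
def Van (X : SComplex V) (k : ℕ) : Prop :=
  ∀ g : Finset V → K, (∀ s, g s ≠ 0 → s ∈ X.cells (k+1)) → Dop K g = 0 →
    ∃ f : Finset V → K, (∀ s, f s ≠ 0 → s ∈ X.cells (k+2)) ∧ Dop K f = g

lemma boundary_apply (X : SComplex V) (k : ℕ) (c : SComplex.Chains K X (k+1))
    (τ : ↥(X.cells k)) :
    SComplex.boundary K X k c τ = Dop K (cval K X (k+1) c) ↑τ := by
  have h1 : SComplex.boundary K X k c τ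
      = ∑ σ : ↥(X.cells (k+1)), coefK K (σ : Finset V) ((τ : Finset V)) * c σ := by
    simp only [SComplex.boundary, LinearMap.pi_apply, LinearMap.coe_sum,
      Finset.sum_apply, LinearMap.smul_apply, LinearMap.proj_apply, smul_eq_mul]
    rfl
  rw [h1]
  have h2 : ∑ σ : ↥(X.cells (k+1)), coefK K (σ : Finset V) ((τ : Finset V)) * c σ
      = ∑ σ ∈ X.cells (k+1), coefK K σ ↑τ * cval K X (k+1) c σ := by
    rw [← Finset.sum_coe_sort (X.cells (k+1))
      (fun σ => coefK K σ ↑τ * cval K X (k+1) c σ)]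
    refine Finset.sum_congr rfl fun σ _ => ?_
    have : cval K X (k+1) c ↑σ = c σ := dif_pos σ.2
    rw [this]
  rw [h2]
  unfold Dop
  refine Finset.sum_subset (fun s _ => Finset.mem_powerset.2 (Finset.subset_univ s)) ?_
  intro s _ hs
  have : cval K X (k+1) c s = 0 := dif_neg hs
  rw [this, mul_zero]

lemma bridge (X : SComplex V) (k : ℕ) :
    SComplex.redHomDim K X (k+1) = 0 ↔ Van K X k := by
  have hcyc : SComplex.cyclesSub K X (k+1) = LinearMap.ker (SComplex.boundary K X k) := rfl
  have hstep : SComplex.redHomDim K X (k+1) = 0 ↔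
      ∀ z : SComplex.Chains K X (k+1), SComplex.boundary K X k z = 0 →
        ∃ w, SComplex.boundary K X (k+1) w = z := by
    unfold SComplex.redHomDim
    rw [Module.finrank_zero_iff, Submodule.Quotient.subsingleton_iff,
      Submodule.eq_top_iff']
    constructor
    · intro h z hz
      have hx : z ∈ SComplex.cyclesSub K X (k+1) := by rw [hcyc]; exact LinearMap.mem_ker.2 hz
      have := h ⟨z, hx⟩
      rw [Submodule.mem_comap] at this
      simpa [LinearMap.mem_range] using this
    · intro h x
      rw [Submodule.mem_comap]
      have hx : SComplex.boundary K X k ↑x = 0 := LinearMap.mem_ker.1 x.2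
      obtain ⟨w, hw⟩ := h ↑x hx
      simpa [LinearMap.mem_range] using ⟨w, hw⟩
  rw [hstep]
  constructor
  · intro H g hg hDg
    have hcz : cval K X (k+1) (fun σ => g ↑σ) = g := by
      funext s
      unfold cval
      split_ifs with h
      · rfl
      · by_contra hne
        exact h (hg s fun h0 => hne h0.symm)
    have hbz : SComplex.boundary K X k (fun σ => g ↑σ) = 0 := by
      funext τ
      rw [boundary_apply, hcz]
      simpa using congrFun hDg ↑τ
    obtain ⟨w, hw⟩ := H (fun σ => g ↑σ) hbz
    refine ⟨cval K X (k+2) w, fun s hs => ?_, ?_⟩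
    · by_contra h
      exact hs (dif_neg h)
    · funext t
      by_cases htc : t ∈ X.cells (k+1)
      · have h3 := congrFun hw ⟨t, htc⟩
        rw [boundary_apply] at h3
        exact h3
      · rw [D_supp K (fun s hs => by by_contra h; exact hs (dif_neg h)) htc]
        by_contra hne
        exact htc (hg t fun h0 => hne h0.symm)
  · intro H z hz
    have hgz : ∀ s, cval K X (k+1) z s ≠ 0 → s ∈ X.cells (k+1) := by
      intro s hs
      by_contra h
      exact hs (dif_neg h)
    have hDz : Dop K (cval K X (k+1) z) = 0 := by
      funext t
      by_cases htc : t ∈ X.cells k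
      · have h3 := congrFun hz ⟨t, htc⟩
        rw [boundary_apply K X k z ⟨t, htc⟩] at h3
        simpa using h3
      · simpa using D_supp K hgz htc
    obtain ⟨f, hf, hDf⟩ := H (cval K X (k+1) z) hgz hDz
    refine ⟨fun σ => f ↑σ, ?_⟩
    funext τ
    have hcw : cval K X (k+2) (fun σ => f ↑σ) = f := by
      funext s
      unfold cval
      split_ifs with h
      · rfl
      · by_contra hne
        exact h (hf s fun h0 => hne h0.symm)
    have h4 : SComplex.boundary K X (k+1) (fun σ => f ↑σ) τ
        = Dop K (cval K X (k+2) (fun σ => f ↑σ)) ↑τ := boundary_apply K X (k+1) _ τ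
    rw [h4, hcw, hDf]
    exact dif_pos τ.2
lemma cext {X Y : SComplex V} (h : X.faces = Y.faces) : X = Y := by
  cases X; cases Y; simpa using h

lemma mem_induced {X : SComplex V} {S τ : Finset V} :
    τ ∈ (X.induced S).faces ↔ τ ∈ X.faces ∧ τ ⊆ S := Finset.mem_filter

lemma mem_link {Z : SComplex V} {B τ : Finset V} :
    τ ∈ (Z.link B).faces ↔ τ ∈ Z.faces ∧ τ ∩ B = ∅ ∧ τ ∪ B ∈ Z.faces := Finset.mem_filter

lemma mem_link_single {Y : SComplex V} {v : V} {τ : Finset V} :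
    τ ∈ (Y.link {v}).faces ↔ v ∉ τ ∧ insert v τ ∈ Y.faces := by
  rw [mem_link]
  constructor
  · rintro ⟨h1, h2, h3⟩
    have hv : v ∉ τ := by
      intro hv
      have : v ∈ τ ∩ {v} := Finset.mem_inter.2 ⟨hv, Finset.mem_singleton_self v⟩
      rw [h2] at this
      exact absurd this (Finset.notMem_empty v)
    refine ⟨hv, ?_⟩
    have he : τ ∪ {v} = insert v τ := by rw [Finset.union_comm, ← Finset.insert_eq]
    rwa [he] at h3
  · rintro ⟨hv, hins⟩
    refine ⟨Y.down_closed hins (Finset.subset_insert v τ), ?_, ?_⟩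
    · apply Finset.eq_empty_iff_forall_notMem.2
      intro x hx
      rw [Finset.mem_inter, Finset.mem_singleton] at hx
      exact hv (hx.2 ▸ hx.1)
    · rw [Finset.union_comm, ← Finset.insert_eq]
      exact hins

lemma mem_induced_erase {Y : SComplex V} {v : V} {s : Finset V} :
    s ∈ (Y.induced ((univ : Finset V).erase v)).faces ↔ s ∈ Y.faces ∧ v ∉ s := by
  rw [mem_induced]
  constructor
  · rintro ⟨h1, h2⟩
    exact ⟨h1, fun hv => (Finset.mem_erase.1 (h2 hv)).1 rfl⟩
  · rintro ⟨h1, h2⟩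
    exact ⟨h1, fun x hx => Finset.mem_erase.2 ⟨fun he => h2 (he ▸ hx), Finset.mem_univ x⟩⟩

noncomputable def lam (v : V) (b : Finset V → K) : Finset V → K :=
  fun s => if v ∈ s then ((-1 : K) ^ pos s v) * b (s.erase v) else 0

lemma lam_supp {v : V} (b : Finset V → K) : ∀ s, lam K v b s ≠ 0 → v ∈ s := by
  intro s hs
  by_contra h
  exact hs (if_neg h)

lemma psi_lam {v : V} (b : Finset V → K) (hb : ∀ s, b s ≠ 0 → v ∉ s) :
    psi K v (lam K v b) = b := by
  funext τ
  unfold psi lam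
  by_cases h : v ∈ τ
  · rw [if_pos h]
    by_contra hne
    exact hb τ (fun h0 => hne h0.symm) h
  · rw [if_neg h, if_pos (Finset.mem_insert_self v τ), Finset.erase_insert h,
      ← mul_assoc, sq_neg_one, one_mul]

lemma D_lam {v : V} (b : Finset V → K) {t : Finset V} (ht : v ∉ t) :
    Dop K (lam K v b) t = b t := by
  rw [D_vpart K (lam K v b) (lam_supp K b) ht]
  have : lam K v b (insert v t)
      = ((-1 : K) ^ pos (insert v t) v) * b t := by
    unfold lam
    rw [if_pos (Finset.mem_insert_self v t), Finset.erase_insert ht]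
  rw [this, ← mul_assoc, sq_neg_one, one_mul]

lemma coneA (Y : SComplex V) (v : V) (q : ℕ)
    (hY : Van K Y q) (hL : Van K (Y.link {v}) q) :
    Van K (Y.induced ((univ : Finset V).erase v)) q := by
  intro a ha hda
  have haY : ∀ s, a s ≠ 0 → s ∈ Y.cells (q+1) := fun s hs => by
    have h := ha s hs
    rw [mem_cells, mem_induced_erase] at h
    exact mem_cells.2 ⟨h.1.1, h.2⟩
  have hav : ∀ s, a s ≠ 0 → v ∉ s := fun s hs => by
    have h := ha s hs
    rw [mem_cells, mem_induced_erase] at h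
    exact h.1.2
  obtain ⟨f, hf, hDf⟩ := hY a haY hda
  have hf0supp : ∀ s, (if v ∈ s then 0 else f s) ≠ 0 → v ∉ s := by
    intro s hs h
    exact hs (if_pos h)
  have hfvsupp : ∀ s, (if v ∈ s then f s else 0) ≠ 0 → v ∈ s := by
    intro s hs
    by_contra h
    exact hs (if_neg h)
  have hpsifv : psi K v (fun s => if v ∈ s then f s else 0) = psi K v f := by
    funext τ
    unfold psi
    by_cases h : v ∈ τ
    · simp [h]
    · simp [h]
  have hbv : ∀ s, psi K v f s ≠ 0 → v ∉ s := by
    intro s hs h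
    exact hs (if_pos h)
  have hbsupp : ∀ τ, psi K v f τ ≠ 0 → τ ∈ (Y.link {v}).cells (q+1) := by
    intro τ hτ
    have h : v ∉ τ := hbv τ hτ
    unfold psi at hτ
    rw [if_neg h] at hτ
    have hf' : f (insert v τ) ≠ 0 := by
      intro h0
      rw [h0, mul_zero] at hτ
      exact hτ rfl
    have hcell := mem_cells.1 (hf _ hf')
    refine mem_cells.2 ⟨mem_link_single.2 ⟨h, hcell.1⟩, ?_⟩
    have hci := Finset.card_insert_of_notMem h
    have := hcell.2
    omega
  have hDb : Dop K (psi K v f) = 0 := by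
    funext t
    simp only [Pi.zero_apply]
    by_cases hvt : v ∈ t
    · exact D_vfree K (psi K v f) hbv hvt
    · have key := D_vpart_v K (fun s => if v ∈ s then f s else 0) hfvsupp hvt
      rw [hpsifv] at key
      have hsplit := Dop_split K v f (insert v t)
      have h0 : Dop K (fun s => if v ∈ s then 0 else f s) (insert v t) = 0 :=
        D_vfree K _ hf0supp (Finset.mem_insert_self v t)
      have hat : Dop K f (insert v t) = a (insert v t) := congrFun hDf _
      have haz : a (insert v t) = 0 := by
        by_contra hne
        exact hav _ hne (Finset.mem_insert_self v t)
      have hfv0 : Dop K (fun s => if v ∈ s then f s else 0) (insert v t) = 0 := by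
        rw [hat, haz, h0, zero_add] at hsplit
        exact hsplit.symm
      rw [hfv0] at key
      have hε : ((-1 : K) ^ pos (insert v t) v) ≠ 0 := neg_one_pow_ne_zero' K _
      have : ((-1 : K) ^ pos (insert v t) v) * Dop K (psi K v f) t = 0 := by
        have := key.symm
        rwa [neg_eq_zero] at this
      exact (mul_eq_zero.1 this).resolve_left hε
  obtain ⟨h, hhsupp, hDh⟩ := hL (psi K v f) hbsupp hDb
  have hhv : ∀ s, h s ≠ 0 → v ∉ s := fun s hs =>
    (mem_link_single.1 (mem_cells.1 (hhsupp s hs)).1).1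
  refine ⟨fun s => (if v ∈ s then 0 else f s) + h s, ?_, ?_⟩
  · intro s hs
    by_cases hfs : (if v ∈ s then 0 else f s) = 0
    · have hhs : h s ≠ 0 := by
        intro h0
        apply hs
        simp [hfs, h0]
      have hm := mem_cells.1 (hhsupp s hhs)
      obtain ⟨hvs, hins⟩ := mem_link_single.1 hm.1
      exact mem_cells.2 ⟨mem_induced_erase.2
        ⟨Y.down_closed hins (Finset.subset_insert v s), hvs⟩, hm.2⟩
    · have hvs : v ∉ s := hf0supp s hfs
      have hfs' : f s ≠ 0 := by
        intro h0
        rw [if_neg hvs, h0] at hfs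
        exact hfs rfl
      have hm := mem_cells.1 (hf s hfs')
      exact mem_cells.2 ⟨mem_induced_erase.2 ⟨hm.1, hvs⟩, hm.2⟩
  · funext t
    rw [Dop_add]
    by_cases hvt : v ∈ t
    · rw [D_vfree K _ hf0supp hvt, D_vfree K h hhv hvt]
      have : a t = 0 := by
        by_contra hne
        exact hav t hne hvt
      rw [this]
      ring
    · have hsplit := Dop_split K v f t
      have hat : Dop K f t = a t := congrFun hDf t
      have hfvt : Dop K (fun s => if v ∈ s then f s else 0) t = psi K v f t := by
        rw [D_vpart K _ hfvsupp hvt, if_pos (Finset.mem_insert_self v t)]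
        unfold psi
        rw [if_neg hvt]
      have hht : Dop K h t = psi K v f t := congrFun hDh t
      rw [hht]
      rw [hat, hfvt] at hsplit
      exact hsplit.symm

lemma coneB (Y : SComplex V) (v : V) (q : ℕ)
    (hY : Van K Y (q+1)) (hY1 : Van K (Y.induced ((univ : Finset V).erase v)) q) :
    Van K (Y.link {v}) q := by
  intro b hb hDb
  have hbv : ∀ s, b s ≠ 0 → v ∉ s := fun s hs =>
    (mem_link_single.1 (mem_cells.1 (hb s hs)).1).1
  have hbY1 : ∀ s, b s ≠ 0 → s ∈ (Y.induced ((univ : Finset V).erase v)).cells (q+1) := by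
    intro s hs
    have hm := mem_cells.1 (hb s hs)
    obtain ⟨hvs, hins⟩ := mem_link_single.1 hm.1
    exact mem_cells.2 ⟨mem_induced_erase.2
      ⟨Y.down_closed hins (Finset.subset_insert v s), hvs⟩, hm.2⟩
  obtain ⟨c, hcsupp, hDc⟩ := hY1 b hbY1 hDb
  have hcv : ∀ s, c s ≠ 0 → v ∉ s := fun s hs =>
    (mem_induced_erase.1 (mem_cells.1 (hcsupp s hs)).1).2
  have hcY : ∀ s, c s ≠ 0 → s ∈ Y.cells (q+2) := fun s hs => by
    have hm := mem_cells.1 (hcsupp s hs)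
    exact mem_cells.2 ⟨(mem_induced_erase.1 hm.1).1, hm.2⟩
  have hzsupp : ∀ s, (fun s => lam K v b s - c s) s ≠ 0 → s ∈ Y.cells (q+1+1) := by
    intro s hs
    by_cases hl : lam K v b s = 0
    · have hcs : c s ≠ 0 := by
        intro h0
        simp only [hl, h0, sub_zero] at hs
        exact hs rfl
      exact hcY s hcs
    · have hvs : v ∈ s := lam_supp K b s hl
      have hbe : b (s.erase v) ≠ 0 := by
        intro h0
        unfold lam at hl
        rw [if_pos hvs, h0, mul_zero] at hl
        exact hl rfl
      have hm := mem_cells.1 (hb _ hbe)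
      obtain ⟨hvs', hins⟩ := mem_link_single.1 hm.1
      rw [Finset.insert_erase hvs] at hins
      refine mem_cells.2 ⟨hins, ?_⟩
      have h1 := Finset.card_erase_of_mem hvs
      have h2 : 1 ≤ s.card := Finset.card_pos.2 ⟨v, hvs⟩
      have := hm.2
      omega
  have hDz : Dop K (fun s => lam K v b s - c s) = 0 := by
    funext t
    simp only [Pi.zero_apply]
    rw [Dop_sub]
    by_cases hvt : v ∈ t
    · have h1 : Dop K c t = 0 := D_vfree K c hcv hvt
      have ht' : v ∉ t.erase v := Finset.notMem_erase v t
      have heq : insert v (t.erase v) = t := Finset.insert_erase hvt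
      have h2 : Dop K (lam K v b) t = 0 := by
        rw [← heq, D_vpart_v K (lam K v b) (lam_supp K b) ht', psi_lam K b hbv]
        have h3 : Dop K b (t.erase v) = 0 := congrFun hDb _
        rw [h3, mul_zero, neg_zero]
      rw [h1, h2]
      ring
    · rw [D_lam K b hvt]
      have h3 : Dop K c t = b t := congrFun hDc t
      rw [h3]
      ring
  obtain ⟨F, hFsupp, hDF⟩ := hY (fun s => lam K v b s - c s) hzsupp hDz
  have hFvsupp : ∀ s, (if v ∈ s then F s else 0) ≠ 0 → v ∈ s := by
    intro s hs
    by_contra h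
    exact hs (if_neg h)
  have hpsiF : psi K v (fun s => if v ∈ s then F s else 0) = psi K v F := by
    funext τ
    unfold psi
    by_cases h : v ∈ τ
    · simp [h]
    · simp [h]
  have hhv : ∀ s, psi K v F s ≠ 0 → v ∉ s := by
    intro s hs h
    exact hs (if_pos h)
  have hhsupp : ∀ τ, (fun τ => -(psi K v F τ)) τ ≠ 0 → τ ∈ (Y.link {v}).cells (q+2) := by
    intro τ hτ
    rw [neg_ne_zero] at hτ
    have h : v ∉ τ := hhv τ hτ
    unfold psi at hτ
    rw [if_neg h] at hτ
    have hf' : F (insert v τ) ≠ 0 := by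
      intro h0
      rw [h0, mul_zero] at hτ
      exact hτ rfl
    have hcell := mem_cells.1 (hFsupp _ hf')
    refine mem_cells.2 ⟨mem_link_single.2 ⟨h, hcell.1⟩, ?_⟩
    have hci := Finset.card_insert_of_notMem h
    have := hcell.2
    omega
  refine ⟨fun τ => -(psi K v F τ), hhsupp, ?_⟩
  funext t
  rw [Dop_neg]
  by_cases hvt : v ∈ t
  · rw [D_vfree K (psi K v F) hhv hvt, neg_zero]
    by_contra hne
    exact hbv t (fun h0 => hne h0.symm) hvt
  · have hkey := congrFun hDF (insert v t)
    have hsplit := Dop_split K v F (insert v t)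
    have h0 : Dop K (fun s => if v ∈ s then 0 else F s) (insert v t) = 0 :=
      D_vfree K _ (fun s hs h => hs (if_pos h)) (Finset.mem_insert_self v t)
    have hvv := D_vpart_v K (fun s => if v ∈ s then F s else 0) hFvsupp hvt
    rw [hpsiF] at hvv
    have hz1 : lam K v b (insert v t) - c (insert v t)
        = ((-1 : K) ^ pos (insert v t) v) * b t := by
      have hc0 : c (insert v t) = 0 := by
        by_contra hne
        exact hcv _ hne (Finset.mem_insert_self v t)
      unfold lam
      rw [hc0, if_pos (Finset.mem_insert_self v t), Finset.erase_insert hvt, sub_zero]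
    have hε : ((-1 : K) ^ pos (insert v t) v) ≠ 0 := neg_one_pow_ne_zero' K _
    have heq2 : ((-1 : K) ^ pos (insert v t) v) * (-(Dop K (psi K v F) t))
        = ((-1 : K) ^ pos (insert v t) v) * b t := by
      rw [← hz1, ← hkey, hsplit, h0, hvv]
      ring
    exact mul_left_cancel₀ hε heq2
lemma inter_singleton_empty {τ : Finset V} {v : V} : τ ∩ {v} = ∅ ↔ v ∉ τ := by
  constructor
  · intro h hv
    have : v ∈ τ ∩ {v} := Finset.mem_inter.2 ⟨hv, Finset.mem_singleton_self v⟩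
    rw [h] at this
    exact absurd this (Finset.notMem_empty v)
  · intro h
    apply Finset.eq_empty_iff_forall_notMem.2
    intro x hx
    rw [Finset.mem_inter, Finset.mem_singleton] at hx
    exact h (hx.2 ▸ hx.1)

lemma linkLink (Z : SComplex V) (B : Finset V) (v : V) (hv : v ∉ B) :
    (Z.link B).link {v} = Z.link (insert v B) := by
  apply cext
  ext τ
  rw [mem_link_single, mem_link, mem_link]
  have hunion : (insert v τ) ∪ B = τ ∪ insert v B := by
    ext x
    simp only [Finset.mem_union, Finset.mem_insert]
    tauto
  constructor
  · rintro ⟨hvτ, hZ, hiB, huB⟩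
    have hint : τ ∩ insert v B = ∅ := by
      apply Finset.eq_empty_iff_forall_notMem.2
      intro x hx
      rw [Finset.mem_inter, Finset.mem_insert] at hx
      rcases hx.2 with rfl | hxB
      · exact hvτ hx.1
      · have : x ∈ (insert v τ) ∩ B :=
          Finset.mem_inter.2 ⟨Finset.mem_insert_of_mem hx.1, hxB⟩
        rw [hiB] at this
        exact absurd this (Finset.notMem_empty x)
    refine ⟨Z.down_closed hZ (Finset.subset_insert v τ), hint, ?_⟩
    rw [← hunion]
    exact huB
  · rintro ⟨hZ, hint, huB⟩
    have hvτ : v ∉ τ := by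
      intro hc
      have : v ∈ τ ∩ insert v B :=
        Finset.mem_inter.2 ⟨hc, Finset.mem_insert_self v B⟩
      rw [hint] at this
      exact absurd this (Finset.notMem_empty v)
    have hsub : insert v τ ⊆ τ ∪ insert v B := by
      intro x hx
      rw [Finset.mem_insert] at hx
      rcases hx with rfl | hxτ
      · exact Finset.mem_union_right τ (Finset.mem_insert_self x B)
      · exact Finset.mem_union_left _ hxτ
    refine ⟨hvτ, Z.down_closed huB hsub, ?_, ?_⟩
    · apply Finset.eq_empty_iff_forall_notMem.2
      intro x hx
      rw [Finset.mem_inter, Finset.mem_insert] at hx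
      rcases hx.1 with rfl | hxτ
      · exact hv hx.2
      · have : x ∈ τ ∩ insert v B :=
          Finset.mem_inter.2 ⟨hxτ, Finset.mem_insert_of_mem hx.2⟩
        rw [hint] at this
        exact absurd this (Finset.notMem_empty x)
    · rw [hunion]
      exact huB

lemma induced_insert_link (X : SComplex V) (A B : Finset V) (v : V)
    (hBA : B ⊆ A) (hv : v ∉ A) :
    ((X.induced (insert v A)).link B).induced ((univ : Finset V).erase v)
      = (X.induced A).link B := by
  have hvB : v ∉ B := fun h => hv (hBA h)
  apply cext
  ext τ
  rw [mem_induced_erase, mem_link, mem_link, mem_induced, mem_induced, mem_induced, mem_induced]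
  constructor
  · rintro ⟨⟨⟨hX, hsub⟩, hint, hXu, hsubu⟩, hvτ⟩
    have hτA : τ ⊆ A := fun x hx =>
      (Finset.mem_insert.1 (hsub hx)).resolve_left (fun he => hvτ (he ▸ hx))
    have hvu : v ∉ τ ∪ B := by
      rw [Finset.mem_union]
      rintro (h | h)
      · exact hvτ h
      · exact hvB h
    have hτBA : τ ∪ B ⊆ A := fun x hx =>
      (Finset.mem_insert.1 (hsubu hx)).resolve_left (fun he => hvu (he ▸ hx))
    exact ⟨⟨hX, hτA⟩, hint, hXu, hτBA⟩
  · rintro ⟨⟨hX, hsub⟩, hint, hXu, hsubu⟩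
    have hvτ : v ∉ τ := fun h => hv (hsub h)
    exact ⟨⟨⟨hX, hsub.trans (Finset.subset_insert v A)⟩, hint, hXu,
      hsubu.trans (Finset.subset_insert v A)⟩, hvτ⟩

lemma link_induced_erase (X : SComplex V) (A B' : Finset V) (v : V)
    (hvB : v ∉ B') :
    ((X.induced A).link B').induced ((univ : Finset V).erase v)
      = (X.induced (A.erase v)).link B' := by
  apply cext
  ext τ
  rw [mem_induced_erase, mem_link, mem_link, mem_induced, mem_induced, mem_induced, mem_induced]
  constructor
  · rintro ⟨⟨⟨hX, hsub⟩, hint, hXu, hsubu⟩, hvτ⟩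
    refine ⟨⟨hX, fun x hx => Finset.mem_erase.2 ⟨fun he => hvτ (he ▸ hx), hsub hx⟩⟩,
      hint, hXu, fun x hx => Finset.mem_erase.2 ⟨?_, hsubu hx⟩⟩
    intro he
    subst he
    rw [Finset.mem_union] at hx
    rcases hx with h | h
    · exact hvτ h
    · exact hvB h
  · rintro ⟨⟨hX, hsub⟩, hint, hXu, hsubu⟩
    have hvτ : v ∉ τ := fun h => (Finset.mem_erase.1 (hsub h)).1 rfl
    exact ⟨⟨⟨hX, hsub.trans (Finset.erase_subset v A)⟩, hint, hXu,
      hsubu.trans (Finset.erase_subset v A)⟩, hvτ⟩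

end CondPAux

/-- **Claim.** For `k ≥ 0` and `m ≥ 1`, the conditions `P(k,m)` and
`P(k+1,m-1)` are equivalent (here `m ≥ 1` is expressed by writing `m + 1`). -/
theorem condP_iff_condP_succ {V : Type} [DecidableEq V] [Fintype V]
    (K : Type) [Field K] (X : SComplex V) (d : ℕ) (k m : ℕ) :
    CondP K X d k (m + 1) ↔ CondP K X d (k + 1) m := by
  constructor
  · intro hP B A hBA hA hB i hi
    by_cases hcard : Fintype.card V - k ≤ A.card
    · exact hP B A hBA hcard (hB.trans (Nat.le_succ m)) i hi
    · have hAne : ∃ v, v ∉ A := by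
        by_contra hc
        push_neg at hc
        have hAu : A = Finset.univ := Finset.eq_univ_iff_forall.2 hc
        apply hcard
        rw [hAu, Finset.card_univ]
        exact Nat.sub_le _ _
      obtain ⟨v, hv⟩ := hAne
      have hvB : v ∉ B := fun h => hv (hBA h)
      have hA' : Fintype.card V - k ≤ (insert v A).card := by
        rw [Finset.card_insert_of_notMem hv]
        omega
      have h1 : SComplex.redHomDim K ((X.induced (insert v A)).link B) (i+1) = 0 :=
        hP B (insert v A) (hBA.trans (Finset.subset_insert v A)) hA'
          (hB.trans (Nat.le_succ m)) i hi
      have h2 : SComplex.redHomDim K ((X.induced (insert v A)).link (insert v B)) (i+1) = 0 :=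
        hP (insert v B) (insert v A) (Finset.insert_subset_insert v hBA) hA'
          (by rw [Finset.card_insert_of_notMem hvB]; omega) i hi
      have hVY : CondPAux.Van K ((X.induced (insert v A)).link B) i :=
        (CondPAux.bridge K _ i).1 h1
      have hVL : CondPAux.Van K (((X.induced (insert v A)).link B).link {v}) i := by
        rw [CondPAux.linkLink _ _ _ hvB]
        exact (CondPAux.bridge K _ i).1 h2
      have hVY1 := CondPAux.coneA K _ v i hVY hVL
      rw [CondPAux.induced_insert_link X A B v hBA hv] at hVY1
      exact (CondPAux.bridge K _ i).2 hVY1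
  · intro hP B A hBA hA hB i hi
    by_cases hc : B.card ≤ m
    · exact hP B A hBA (by omega) hc i hi
    · have hBcard : B.card = m + 1 := le_antisymm hB (by omega)
      have hBne : B.Nonempty := Finset.card_pos.1 (by omega)
      obtain ⟨v, hvB⟩ := hBne
      have hvA : v ∈ A := hBA hvB
      have hvB' : v ∉ B.erase v := Finset.notMem_erase v B
      have hB'A : B.erase v ⊆ A := (Finset.erase_subset v B).trans hBA
      have hB'card : (B.erase v).card = m := by
        rw [Finset.card_erase_of_mem hvB, hBcard]
        omega
      have h1 : CondPAux.Van K ((X.induced A).link (B.erase v)) (i+1) :=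
        (CondPAux.bridge K _ (i+1)).1
          (hP (B.erase v) A hB'A (by omega) (by omega) (i+1) (by omega))
      have h2 : CondPAux.Van K
          (((X.induced A).link (B.erase v)).induced ((Finset.univ : Finset V).erase v)) i := by
        rw [CondPAux.link_induced_erase X A (B.erase v) v hvB']
        refine (CondPAux.bridge K _ i).1
          (hP (B.erase v) (A.erase v) (Finset.erase_subset_erase v hBA) ?_ (by omega) i hi)
        rw [Finset.card_erase_of_mem hvA]
        omega
      have hVL := CondPAux.coneB K ((X.induced A).link (B.erase v)) v i h1 h2
      rw [CondPAux.linkLink _ _ _ hvB', Finset.insert_erase hvB] at hVL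
      exact (CondPAux.bridge K _ i).2 hVL
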